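/- Let {X_n} be Banach spaces and U a free ultrafilter on ℕ. Then n(∏_U X_n) ≤ lim_U n(X_n), where n denotes the numerical index. -/

import Mathlib

open Filter Metric ENNReal

set_option maxHeartbeats 1000000
set_option synthInstance.maxHeartbeats 400000

noncomputable def nradius {E : Type*} [SeminormedAddCommGroup E] [NormedSpace ℝ E]
    (T : E →L[ℝ] E) : ℝ :=
  sSup {r : ℝ | ∃ (x : E) (f : E →L[ℝ] ℝ), ‖x‖ = 1 ∧ ‖f‖ = 1 ∧ f x = 1 ∧ r = |f (T x)|}

noncomputable def nindex (E : Type*) [SeminormedAddCommGroup E] [NormedSpace ℝ E] : ℝ :=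
  sInf {r : ℝ | ∃ T : E →L[ℝ] E, ‖T‖ = 1 ∧ r = nradius T}

section basic
variable {E : Type*} [SeminormedAddCommGroup E] [NormedSpace ℝ E]

lemma nradius_set_bounds (T : E →L[ℝ] E) {r : ℝ}
    (hr : r ∈ {r : ℝ | ∃ (x : E) (f : E →L[ℝ] ℝ), ‖x‖ = 1 ∧ ‖f‖ = 1 ∧ f x = 1 ∧ r = |f (T x)|}) :
    0 ≤ r ∧ r ≤ ‖T‖ := by
  obtain ⟨x, f, hx, hf, hfx, rfl⟩ := hr
  refine ⟨abs_nonneg _, ?_⟩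
  calc |f (T x)| ≤ ‖f‖ * ‖T x‖ := by
        simpa using f.le_opNorm (T x)
    _ ≤ 1 * (‖T‖ * ‖x‖) := by
        rw [hf]; exact mul_le_mul_of_nonneg_left (T.le_opNorm x) zero_le_one
    _ = ‖T‖ := by rw [hx]; ring

lemma nradius_nonneg (T : E →L[ℝ] E) : 0 ≤ nradius T :=
  Real.sSup_nonneg (fun _ hr => (nradius_set_bounds T hr).1)

lemma nradius_le_norm (T : E →L[ℝ] E) : nradius T ≤ ‖T‖ :=
  Real.sSup_le (fun _ hr => (nradius_set_bounds T hr).2) (norm_nonneg T)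

lemma abs_le_nradius (T : E →L[ℝ] E) {x : E} {f : E →L[ℝ] ℝ}
    (hx : ‖x‖ = 1) (hf : ‖f‖ = 1) (hfx : f x = 1) : |f (T x)| ≤ nradius T :=
  le_csSup ⟨‖T‖, fun _ hs => (nradius_set_bounds T hs).2⟩ ⟨x, f, hx, hf, hfx, rfl⟩

lemma nindex_nonneg (E : Type*) [SeminormedAddCommGroup E] [NormedSpace ℝ E] :
    0 ≤ nindex E :=
  Real.sInf_nonneg (by rintro r ⟨T, hT, rfl⟩; exact nradius_nonneg T)

end basic

section key
variable {E : Type*} [NormedAddCommGroup E] [NormedSpace ℝ E] [CompleteSpace E]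

lemma key_lower (S : E →L[ℝ] E) (m t : ℝ) (hm0 : 0 ≤ m) (ht : 0 < t)
    (hpair : ∀ (x : E) (f : E →L[ℝ] ℝ), ‖x‖ = 1 → ‖f‖ = 1 → f x = 1 → f (S x) ≤ m)
    (x : E) : (1 - t * m) * ‖x‖ ≤ ‖x - t • S x‖ := by
  rcases eq_or_ne x 0 with rfl | hx
  · simp
  obtain ⟨f, hf1, hfx0⟩ := exists_dual_vector ℝ x (norm_ne_zero_iff.2 hx)
  have hfx : f x = ‖x‖ := by simpa using hfx0
  have hxn : ‖x‖ ≠ 0 := by simpa using hx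
  have hu : ‖(‖x‖⁻¹ • x)‖ = 1 := by
    rw [norm_smul, norm_inv, norm_norm, inv_mul_cancel₀ hxn]
  have hfu : f (‖x‖⁻¹ • x) = 1 := by
    rw [map_smul, smul_eq_mul, hfx]
    exact inv_mul_cancel₀ hxn
  have hSx : f (S x) ≤ m * ‖x‖ := by
    have h := hpair _ f hu hf1 hfu
    rw [map_smul, map_smul, smul_eq_mul] at h
    have := mul_le_mul_of_nonneg_left h (norm_nonneg x)
    rwa [← mul_assoc, mul_inv_cancel₀ hxn, one_mul, mul_comm] at this
  have h1 : f (x - t • S x) ≤ ‖x - t • S x‖ := by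
    calc f (x - t • S x) ≤ ‖f‖ * ‖x - t • S x‖ := le_trans (le_abs_self _)
          (by simpa using f.le_opNorm (x - t • S x))
      _ = ‖x - t • S x‖ := by rw [hf1, one_mul]
  have h2 : (1 - t * m) * ‖x‖ ≤ f (x - t • S x) := by
    rw [map_sub, map_smul, smul_eq_mul, hfx]
    have : t * f (S x) ≤ t * (m * ‖x‖) := mul_le_mul_of_nonneg_left hSx ht.le
    nlinarith [norm_nonneg x]
  linarith

lemma key_norm_bound (S : E →L[ℝ] E) (m t : ℝ) (hm0 : 0 ≤ m) (hS : ‖S‖ ≤ 1)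
    (ht : 0 < t) (ht2 : t ≤ 1/2) (htm : t * m ≤ 1/2)
    (hpair : ∀ (x : E) (f : E →L[ℝ] ℝ), ‖x‖ = 1 → ‖f‖ = 1 → f x = 1 → f (S x) ≤ m) :
    ‖(1 : E →L[ℝ] E) + t • S‖ ≤ (1 + t * t) / (1 - t * m) := by
  have hpos : (0:ℝ) < 1 - t * m := by linarith
  have htS : ‖t • S‖ < 1 := by
    have := norm_smul_le t S
    have h2 : ‖t‖ * ‖S‖ ≤ t * 1 := by
      rw [Real.norm_eq_abs, abs_of_pos ht]
      exact mul_le_mul_of_nonneg_left hS ht.le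
    nlinarith
  set u : (E →L[ℝ] E)ˣ := Units.oneSub (t • S) htS with hu
  have huval : (u : E →L[ℝ] E) = 1 - t • S := rfl
  have hRle : ∀ y : E, ‖(↑u⁻¹ : E →L[ℝ] E) y‖ ≤ (1 - t * m)⁻¹ * ‖y‖ := by
    intro y
    have h1 : (1 - t * m) * ‖(↑u⁻¹ : E →L[ℝ] E) y‖ ≤ ‖y‖ := by
      have hk := key_lower S m t hm0 ht hpair ((↑u⁻¹ : E →L[ℝ] E) y)
      have heq : ((↑u⁻¹ : E →L[ℝ] E) y) - t • S ((↑u⁻¹ : E →L[ℝ] E) y) = y := by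
        have := congrArg (fun (A : E →L[ℝ] E) => A y) u.mul_inv
        simpa [huval, ContinuousLinearMap.sub_apply, ContinuousLinearMap.smul_apply,
          ContinuousLinearMap.mul_apply] using this
      rwa [heq] at hk
    rw [inv_mul_eq_div, le_div_iff₀ hpos]
    nlinarith [h1]
  have hRnorm : ‖(↑u⁻¹ : E →L[ℝ] E)‖ ≤ (1 - t * m)⁻¹ :=
    ContinuousLinearMap.opNorm_le_bound _ (inv_nonneg.2 hpos.le) hRle
  have hfact : (1 : E →L[ℝ] E) + t • S = (1 - (t * t) • (S * S)) * ↑u⁻¹ := by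
    have h1 : ((1 : E →L[ℝ] E) + t • S) * (↑u : E →L[ℝ] E) = 1 - (t * t) • (S * S) := by
      rw [huval, add_mul, one_mul, mul_sub, mul_one]
      have h2 : (t • S) * (t • S) = (t * t) • (S * S) := by
        rw [smul_mul_assoc, mul_smul_comm, smul_smul]
      rw [h2]
      abel
    calc (1 : E →L[ℝ] E) + t • S = ((1 + t • S) * ↑u) * ↑u⁻¹ := by
          rw [mul_assoc, u.mul_inv, mul_one]
      _ = (1 - (t * t) • (S * S)) * ↑u⁻¹ := by rw [h1]
  rw [hfact]
  have h2 : ‖(1 : E →L[ℝ] E) - (t * t) • (S * S)‖ ≤ 1 + t * t := by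
    calc ‖(1 : E →L[ℝ] E) - (t * t) • (S * S)‖ ≤ ‖(1 : E →L[ℝ] E)‖ + ‖(t * t) • (S * S)‖ :=
          norm_sub_le _ _
      _ ≤ 1 + t * t := by
          have hone : ‖(1 : E →L[ℝ] E)‖ ≤ 1 := by
            simpa [ContinuousLinearMap.one_def] using
              (ContinuousLinearMap.norm_id_le : ‖ContinuousLinearMap.id ℝ E‖ ≤ 1)
          have h3 : ‖(t * t) • (S * S)‖ ≤ t * t := by
            have h4 := norm_mul_le S S
            have h5 : ‖t * t‖ = t * t := by
              rw [Real.norm_eq_abs, abs_of_nonneg (by nlinarith)]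
            have hSS : ‖S * S‖ ≤ 1 := le_trans h4 (by nlinarith [norm_nonneg S])
            calc ‖(t * t) • (S * S)‖ ≤ ‖t * t‖ * ‖S * S‖ :=
                  ContinuousLinearMap.opNorm_smul_le _ _
              _ ≤ (t * t) * 1 := by
                  rw [h5]; exact mul_le_mul_of_nonneg_left hSS (by positivity)
              _ = t * t := mul_one _
          linarith
  calc ‖((1 : E →L[ℝ] E) - (t * t) • (S * S)) * ↑u⁻¹‖
      ≤ ‖(1 : E →L[ℝ] E) - (t * t) • (S * S)‖ * ‖(↑u⁻¹ : E →L[ℝ] E)‖ := norm_mul_le _ _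
    _ ≤ (1 + t * t) * (1 - t * m)⁻¹ := by
        refine mul_le_mul h2 hRnorm (norm_nonneg _) (by positivity)
    _ = (1 + t * t) / (1 - t * m) := by rw [div_eq_mul_inv]

end key


noncomputable def nullIdeal (X : ℕ → Type*) [∀ n, NormedAddCommGroup (X n)]
    [∀ n, NormedSpace ℝ (X n)] (U : Ultrafilter ℕ) : Submodule ℝ (lp X ∞) where
  carrier := {f | Tendsto (fun n => ‖f n‖) (U : Filter ℕ) (nhds 0)}
  zero_mem' := by
    simpa using (tendsto_const_nhds : Tendsto (fun _ : ℕ => (0 : ℝ)) (U : Filter ℕ) (nhds 0))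
  add_mem' := by
    intro f g hf hg
    have h := hf.add hg
    rw [add_zero] at h
    refine squeeze_zero (fun n => norm_nonneg _) (fun n => ?_) h
    simpa using norm_add_le (f n) (g n)
  smul_mem' := by
    intro c f hf
    have h := hf.const_mul ‖c‖
    rw [mul_zero] at h
    refine squeeze_zero (fun n => norm_nonneg _) (fun n => ?_) h
    simp [norm_smul]

section ultra
variable (X : ℕ → Type*) [∀ n, NormedAddCommGroup (X n)] [∀ n, NormedSpace ℝ (X n)]
variable (U : Ultrafilter ℕ)

lemma exists_ulim (a : ℕ → ℝ) (C : ℝ) (hC : ∀ n, |a n| ≤ C) :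
    ∃ l, Tendsto a (U : Filter ℕ) (nhds l) ∧ |l| ≤ C := by
  obtain ⟨l, hmem, hle⟩ := (isCompact_Icc : IsCompact (Set.Icc (-C) C)).ultrafilter_le_nhds
    (U.map a) (by
      rw [Ultrafilter.coe_map, le_principal_iff, mem_map]
      exact univ_mem' (fun n => abs_le.1 (hC n)))
  rw [Ultrafilter.coe_map] at hle
  exact ⟨l, hle, abs_le.2 hmem⟩

lemma mem_nullIdeal_iff (y : lp X ∞) :
    y ∈ nullIdeal X U ↔ Tendsto (fun n => ‖y n‖) (U : Filter ℕ) (nhds 0) := Iff.rfl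

lemma norm_mk_eq (y : lp X ∞) (l : ℝ)
    (h : Tendsto (fun n => ‖y n‖) (U : Filter ℕ) (nhds l)) :
    ‖(Submodule.Quotient.mk y : lp X ∞ ⧸ nullIdeal X U)‖ = l := by
  have hl0 : 0 ≤ l := le_of_tendsto_of_tendsto' tendsto_const_nhds h (fun n => norm_nonneg _)
  refine le_antisymm ?_ ?_
  · refine le_of_forall_pos_le_add ?_
    intro ε hε
    classical
    set z : ∀ n, X n := fun n => if ‖y n‖ < l + ε then 0 else y n with hz
    have hzb : ∀ n, ‖z n‖ ≤ ‖y‖ := by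
      intro n
      by_cases hn : ‖y n‖ < l + ε
      · simp [hz, hn]
      · simpa [hz, hn] using lp.norm_apply_le_norm ENNReal.top_ne_zero y n
    have hzmem : Memℓp z ∞ := memℓp_infty ⟨‖y‖, by rintro - ⟨n, rfl⟩; exact hzb n⟩
    set zl : lp X ∞ := ⟨z, hzmem⟩ with hzl
    have hznull : zl ∈ nullIdeal X U := by
      rw [mem_nullIdeal_iff]
      have hev : ∀ᶠ n in (U : Filter ℕ), ‖y n‖ < l + ε :=
        h.eventually (tendsto_id.eventually_lt_const (lt_add_of_pos_right l hε))
      refine Tendsto.congr' ?_ (tendsto_const_nhds : Tendsto (fun _ : ℕ => (0:ℝ)) _ _)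
      filter_upwards [hev] with n hn
      rw [show zl n = 0 from if_pos hn, norm_zero]
    have hmk : (Submodule.Quotient.mk y : lp X ∞ ⧸ nullIdeal X U)
        = Submodule.Quotient.mk (y - zl) := by
      rw [Submodule.Quotient.mk_sub, (Submodule.Quotient.mk_eq_zero _).2 hznull, sub_zero]
    rw [hmk]
    refine le_trans (Submodule.Quotient.norm_mk_le _ _) ?_
    refine lp.norm_le_of_forall_le (by linarith) ?_
    intro n
    have hsub : (y - zl) n = y n - zl n := by
      rw [lp.coeFn_sub]; rfl
    by_cases hn : ‖y n‖ < l + ε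
    · have h0 : zl n = 0 := by
        change (if ‖y n‖ < l + ε then 0 else y n) = 0
        rw [if_pos hn]
      rw [hsub, h0, sub_zero]
      exact hn.le
    · have h0 : zl n = y n := by
        change (if ‖y n‖ < l + ε then 0 else y n) = y n
        rw [if_neg hn]
      rw [hsub, h0, sub_self, norm_zero]
      linarith
  · refine le_of_forall_pos_le_add ?_
    intro ε hε
    obtain ⟨m, hm_eq, hm_lt⟩ :=
      Submodule.Quotient.norm_mk_lt (Submodule.Quotient.mk y : lp X ∞ ⧸ nullIdeal X U) hε
    have hmem : m - y ∈ nullIdeal X U := (Submodule.Quotient.eq _).1 hm_eq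
    rw [mem_nullIdeal_iff] at hmem
    have htend : Tendsto (fun n => ‖y n‖ - ‖(m - y) n‖) (U : Filter ℕ) (nhds (l - 0)) :=
      h.sub hmem
    have hle : ∀ n, ‖y n‖ - ‖(m - y) n‖ ≤ ‖m‖ := by
      intro n
      have hsub : (m - y) n = m n - y n := by rw [lp.coeFn_sub]; rfl
      have h1 : ‖y n‖ ≤ ‖m n‖ + ‖(m - y) n‖ := by
        rw [hsub]
        calc ‖y n‖ = ‖m n - (m n - y n)‖ := by congr 1; abel
          _ ≤ ‖m n‖ + ‖m n - y n‖ := norm_sub_le _ _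
      have h2 : ‖m n‖ ≤ ‖m‖ := lp.norm_apply_le_norm ENNReal.top_ne_zero m n
      linarith
    have hfin := le_of_tendsto_of_tendsto' htend tendsto_const_nhds hle
    rw [sub_zero] at hfin
    linarith

end ultra

section op
variable (X : ℕ → Type*) [∀ n, NormedAddCommGroup (X n)] [∀ n, NormedSpace ℝ (X n)]
variable (U : Ultrafilter ℕ)

lemma exists_ulim_norm (y : lp X ∞) :
    ∃ l, Tendsto (fun n => ‖y n‖) (U : Filter ℕ) (nhds l) ∧ 0 ≤ l ∧ l ≤ ‖y‖ := by
  obtain ⟨l, hl, hle⟩ := exists_ulim U (fun n => ‖y n‖) ‖y‖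
    (fun n => by
      rw [abs_of_nonneg (norm_nonneg _)]
      exact lp.norm_apply_le_norm ENNReal.top_ne_zero y n)
  exact ⟨l, hl, le_of_tendsto_of_tendsto' tendsto_const_nhds hl (fun n => norm_nonneg _),
    (abs_le.1 hle).2⟩

variable (T : ∀ n, X n →L[ℝ] X n)

noncomputable def bigMap (hT : ∀ n, ‖T n‖ ≤ 2) : lp X ∞ →ₗ[ℝ] lp X ∞ where
  toFun y := ⟨fun n => T n (y n), memℓp_infty ⟨2 * ‖y‖, by
    rintro - ⟨n, rfl⟩
    calc ‖T n (y n)‖ ≤ ‖T n‖ * ‖y n‖ := (T n).le_opNorm _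
      _ ≤ 2 * ‖y‖ := mul_le_mul (hT n) (lp.norm_apply_le_norm ENNReal.top_ne_zero y n)
          (norm_nonneg _) (by norm_num)⟩⟩
  map_add' y1 y2 := by
    apply lp.ext
    funext n
    have h1 : (y1 + y2) n = y1 n + y2 n := by rw [lp.coeFn_add]; rfl
    show T n ((y1 + y2) n) = T n (y1 n) + T n (y2 n)
    rw [h1, map_add]
  map_smul' c y := by
    apply lp.ext
    funext n
    have h1 : (c • y) n = c • (y n) := by rw [lp.coeFn_smul]; rfl
    show T n ((c • y) n) = c • T n (y n)
    rw [h1, map_smul]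

lemma bigMap_apply (hT : ∀ n, ‖T n‖ ≤ 2) (y : lp X ∞) (n : ℕ) :
    (bigMap X T hT y) n = T n (y n) := rfl

lemma bigMap_bound (hT : ∀ n, ‖T n‖ ≤ 2) (y : lp X ∞) (n : ℕ) :
    ‖(bigMap X T hT y) n‖ ≤ 2 * ‖y n‖ := by
  rw [bigMap_apply]
  calc ‖T n (y n)‖ ≤ ‖T n‖ * ‖y n‖ := (T n).le_opNorm _
    _ ≤ 2 * ‖y n‖ := mul_le_mul_of_nonneg_right (hT n) (norm_nonneg _)

lemma bigMap_comap (hT : ∀ n, ‖T n‖ ≤ 2) :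
    nullIdeal X U ≤ Submodule.comap (bigMap X T hT) (nullIdeal X U) := by
  intro y hy
  rw [mem_nullIdeal_iff] at hy
  rw [Submodule.mem_comap, mem_nullIdeal_iff]
  have h2 := hy.const_mul 2
  rw [mul_zero] at h2
  exact squeeze_zero (fun n => norm_nonneg _) (fun n => bigMap_bound X T hT y n) h2

noncomputable def qOp (hT : ∀ n, ‖T n‖ ≤ 2) :
    (lp X ∞ ⧸ nullIdeal X U) →L[ℝ] (lp X ∞ ⧸ nullIdeal X U) :=
  LinearMap.mkContinuous
    (Submodule.mapQ (nullIdeal X U) (nullIdeal X U) (bigMap X T hT) (bigMap_comap X U T hT))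
    2 (by
      intro q
      obtain ⟨y, rfl⟩ := Submodule.Quotient.mk_surjective _ q
      rw [Submodule.mapQ_apply]
      obtain ⟨l, hl, hl0, hly⟩ := exists_ulim_norm X U y
      obtain ⟨l', hl', hl'0, _⟩ := exists_ulim_norm X U (bigMap X T hT y)
      rw [norm_mk_eq X U y l hl, norm_mk_eq X U _ l' hl']
      refine le_of_tendsto_of_tendsto' hl' ?_ (fun n => bigMap_bound X T hT y n)
      simpa using hl.const_mul 2)

lemma qOp_apply_mk (hT : ∀ n, ‖T n‖ ≤ 2) (y : lp X ∞) :
    qOp X U T hT (Submodule.Quotient.mk y) = Submodule.Quotient.mk (bigMap X T hT y) := by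
  rw [qOp, LinearMap.mkContinuous_apply, Submodule.mapQ_apply]

lemma qOp_norm_le_of_eventually (hT : ∀ n, ‖T n‖ ≤ 2) (D : ℝ) (hD : 0 ≤ D)
    (hev : ∀ᶠ n in (U : Filter ℕ), ‖T n‖ ≤ D) : ‖qOp X U T hT‖ ≤ D := by
  refine ContinuousLinearMap.opNorm_le_bound _ hD ?_
  intro q
  obtain ⟨y, rfl⟩ := Submodule.Quotient.mk_surjective _ q
  rw [qOp_apply_mk]
  obtain ⟨l, hl, hl0, hly⟩ := exists_ulim_norm X U y
  obtain ⟨l', hl', hl'0, _⟩ := exists_ulim_norm X U (bigMap X T hT y)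
  rw [norm_mk_eq X U y l hl, norm_mk_eq X U _ l' hl']
  refine le_of_tendsto_of_tendsto hl' (by simpa using hl.const_mul D) ?_
  filter_upwards [hev] with n hn
  rw [bigMap_apply]
  calc ‖T n (y n)‖ ≤ ‖T n‖ * ‖y n‖ := (T n).le_opNorm _
    _ ≤ D * ‖y n‖ := mul_le_mul_of_nonneg_right hn (norm_nonneg _)

lemma qOp_one_add_smul (hT2 : ∀ n, ‖T n‖ ≤ 2) (t : ℝ)
    (hT' : ∀ n, ‖(1 : X n →L[ℝ] X n) + t • T n‖ ≤ 2) :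
    qOp X U (fun n => (1 : X n →L[ℝ] X n) + t • T n) hT'
      = 1 + t • qOp X U T hT2 := by
  apply ContinuousLinearMap.ext
  intro q
  obtain ⟨y, rfl⟩ := Submodule.Quotient.mk_surjective _ q
  rw [qOp_apply_mk]
  have hrhs : (1 + t • qOp X U T hT2)
      (Submodule.Quotient.mk y)
      = Submodule.Quotient.mk (y + t • bigMap X T hT2 y) := by
    rw [ContinuousLinearMap.add_apply, ContinuousLinearMap.smul_apply,
      ContinuousLinearMap.one_apply, qOp_apply_mk, Submodule.Quotient.mk_add,
      Submodule.Quotient.mk_smul]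
  rw [hrhs]
  refine congrArg Submodule.Quotient.mk (lp.ext (funext fun n => ?_))
  rw [bigMap_apply]
  have h1 : (y + t • bigMap X T hT2 y) n
      = y n + t • (T n (y n)) := by
    rw [lp.coeFn_add]
    show y n + (t • bigMap X T _ y) n = _
    rw [lp.coeFn_smul]
    rfl
  rw [h1, ContinuousLinearMap.add_apply, ContinuousLinearMap.smul_apply,
    ContinuousLinearMap.one_apply]

lemma qOp_neg (hT : ∀ n, ‖T n‖ ≤ 2) (hT' : ∀ n, ‖-(T n)‖ ≤ 2) :
    qOp X U (fun n => -(T n)) hT' = - qOp X U T hT := by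
  apply ContinuousLinearMap.ext
  intro q
  obtain ⟨y, rfl⟩ := Submodule.Quotient.mk_surjective _ q
  rw [qOp_apply_mk, ContinuousLinearMap.neg_apply, qOp_apply_mk,
    ← Submodule.Quotient.mk_neg]
  refine congrArg Submodule.Quotient.mk (lp.ext (funext fun n => ?_))
  rw [bigMap_apply]
  show (-(T n)) (y n) = (-(bigMap X T hT y)) n
  rw [lp.coeFn_neg]
  show -(T n) (y n) = -((bigMap X T hT y) n)
  rw [bigMap_apply]

end op


set_option maxHeartbeats 4000000 in
theorem ultraproduct_nindex_le
    (X : ℕ → Type*) [∀ n, NormedAddCommGroup (X n)] [∀ n, NormedSpace ℝ (X n)]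
    [∀ n, CompleteSpace (X n)]
    (U : Ultrafilter ℕ) (hU : (U : Filter ℕ) ≤ Filter.cofinite)
    (L : ℝ) (hL : Tendsto (fun n => nindex (X n)) (U : Filter ℕ) (nhds L)) :
    nindex (lp X ∞ ⧸ nullIdeal X U) ≤ L := by
  classical
  have hL0 : 0 ≤ L :=
    le_of_tendsto_of_tendsto' tendsto_const_nhds hL (fun n => nindex_nonneg _)
  by_cases hA : {n : ℕ | ∃ x : X n, ‖x‖ = 1} ∈ U
  swap
  · -- degenerate case: the quotient has trivial seminorm
    have hzero : ∀ q : lp X ∞ ⧸ nullIdeal X U, ‖q‖ = 0 := by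
      intro q
      obtain ⟨y, rfl⟩ := Submodule.Quotient.mk_surjective _ q
      refine norm_mk_eq X U y 0 ?_
      have hAc : {n : ℕ | ∃ x : X n, ‖x‖ = 1}ᶜ ∈ (U : Filter ℕ) :=
        Ultrafilter.mem_coe.2 (Ultrafilter.compl_mem_iff_notMem.2 hA)
      refine Tendsto.congr' ?_ tendsto_const_nhds
      filter_upwards [hAc] with n hn
      have hy : y n = 0 := by
        by_contra hy0
        exact hn ⟨‖y n‖⁻¹ • y n, by
          rw [norm_smul, norm_inv, norm_norm, inv_mul_cancel₀ (by simpa using hy0)]⟩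
      rw [hy, norm_zero]
    have hempty : {r : ℝ | ∃ Tq : (lp X ∞ ⧸ nullIdeal X U) →L[ℝ] (lp X ∞ ⧸ nullIdeal X U),
        ‖Tq‖ = 1 ∧ r = nradius Tq} = ∅ := by
      rw [Set.eq_empty_iff_forall_notMem]
      rintro r ⟨Tq, hTq, -⟩
      have h0 : ‖Tq‖ ≤ 0 := ContinuousLinearMap.opNorm_le_bound _ le_rfl (fun q => by
        rw [hzero (Tq q), hzero q, mul_zero])
      rw [hTq] at h0; linarith
    rw [nindex, hempty, Real.sInf_empty]
    exact hL0
  -- main case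
  refine le_of_forall_pos_le_add ?_
  intro ε hε
  obtain ⟨L', hL'def⟩ : ∃ x : ℝ, x = L + ε/2 := ⟨_, rfl⟩
  have hL'0 : 0 ≤ L' := by rw [hL'def]; linarith
  obtain ⟨B, hBdef⟩ : ∃ x : ℝ, x = 1 + L' + ε := ⟨_, rfl⟩
  have hB1 : 1 ≤ B := by rw [hBdef]; linarith
  have hB0 : 0 < B := by linarith
  obtain ⟨t, htdef⟩ : ∃ x : ℝ, x = min (1/(2*B)) (ε/(8*B*B)) := ⟨_, rfl⟩
  have ht0 : 0 < t := by
    rw [htdef]; exact lt_min (by positivity) (by positivity)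
  have htmin1 : t ≤ 1/(2*B) := by rw [htdef]; exact min_le_left _ _
  have htmin2 : t ≤ ε/(8*B*B) := by rw [htdef]; exact min_le_right _ _
  have ht2 : t ≤ 1/2 := by
    refine le_trans htmin1 ?_
    rw [div_le_div_iff₀ (by positivity) (by norm_num)]
    nlinarith
  have htL : t * L' ≤ 1/2 := by
    have h2 : t * L' ≤ (1/(2*B)) * B :=
      mul_le_mul htmin1 (by rw [hBdef]; linarith) hL'0 (by positivity)
    have h3 : (1/(2*B)) * B = 1/2 := by field_simp
    linarith
  have htB : t * (B*B) ≤ ε/8 := by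
    have h2 : t * (B*B) ≤ (ε/(8*B*B))*(B*B) := mul_le_mul_of_nonneg_right htmin2 (by positivity)
    have h3 : (ε/(8*B*B))*(B*B) = ε/8 := by field_simp
    linarith
  have hpos1 : 0 < 1 - t * L' := by nlinarith
  obtain ⟨D, hDdef⟩ : ∃ x : ℝ, x = (1 + t*t)/(1 - t*L') := ⟨_, rfl⟩
  have hD0 : 0 ≤ D := by
    rw [hDdef]; exact div_nonneg (by nlinarith) hpos1.le
  -- selection of good operators
  have hP : ∀ n : ℕ, (∃ x : X n, ‖x‖ = 1) →
      ∃ Tn : X n →L[ℝ] X n, ‖Tn‖ = 1 ∧ nradius Tn < nindex (X n) + ε/4 := by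
    rintro n ⟨x, hx⟩
    have : Nontrivial (X n) :=
      nontrivial_of_ne x 0 (fun h => by rw [h, norm_zero] at hx; norm_num at hx)
    have hid : ‖(1 : X n →L[ℝ] X n)‖ = 1 := by
      rw [ContinuousLinearMap.one_def]; exact ContinuousLinearMap.norm_id
    have hne : {r : ℝ | ∃ Tn : X n →L[ℝ] X n, ‖Tn‖ = 1 ∧ r = nradius Tn}.Nonempty :=
      ⟨nradius (1 : X n →L[ℝ] X n), 1, hid, rfl⟩
    obtain ⟨r, hrmem, hrlt⟩ := Real.lt_sInf_add_pos hne (by positivity : (0:ℝ) < ε/4)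
    obtain ⟨Tn, hTn, rfl⟩ := hrmem
    exact ⟨Tn, hTn, hrlt⟩
  set T : ∀ n, X n →L[ℝ] X n := fun n =>
    if h : ∃ Tn : X n →L[ℝ] X n, ‖Tn‖ = 1 ∧ nradius Tn < nindex (X n) + ε/4
    then h.choose else 0 with hTdef
  have hTA : ∀ n, (∃ Tn : X n →L[ℝ] X n, ‖Tn‖ = 1 ∧ nradius Tn < nindex (X n) + ε/4) →
      ‖T n‖ = 1 ∧ nradius (T n) < nindex (X n) + ε/4 := by
    intro n h
    have hTe : T n = h.choose := dif_pos h
    rw [hTe]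
    exact h.choose_spec
  have hT1 : ∀ n, ‖T n‖ ≤ 1 := by
    intro n
    by_cases h : ∃ Tn : X n →L[ℝ] X n, ‖Tn‖ = 1 ∧ nradius Tn < nindex (X n) + ε/4
    · exact le_of_eq (hTA n h).1
    · have hTe : T n = 0 := dif_neg h
      rw [hTe, norm_zero]; norm_num
  have hT2 : ∀ n, ‖T n‖ ≤ 2 := fun n => (hT1 n).trans (by norm_num)
  have hevA : ∀ᶠ n in (U : Filter ℕ), ∃ x : X n, ‖x‖ = 1 := Ultrafilter.mem_coe.2 hA
  have hevI : ∀ᶠ n in (U : Filter ℕ), nindex (X n) < L + ε/4 :=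
    hL.eventually_lt_const (by linarith)
  have hevrad : ∀ᶠ n in (U : Filter ℕ), nradius (T n) ≤ L' ∧ ‖T n‖ = 1 := by
    filter_upwards [hevA, hevI] with n h1 h2
    obtain ⟨hn1, hn2⟩ := hTA n (hP n h1)
    refine ⟨?_, hn1⟩
    rw [hL'def]; linarith
  set Tq := qOp X U T hT2 with hTqdef
  have hTq1 : ‖Tq‖ = 1 := by
    refine le_antisymm
      (qOp_norm_le_of_eventually X U T hT2 1 zero_le_one (Eventually.of_forall hT1)) ?_
    refine le_of_forall_pos_le_add ?_
    intro δ hδ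
    have hx : ∀ n, (∃ x : X n, ‖x‖ = 1) → (∃ x : X n, ‖x‖ < 1 ∧ 1 - δ < ‖T n x‖) := by
      intro n hn
      refine (T n).exists_lt_apply_of_lt_opNorm ?_
      rw [(hTA n (hP n hn)).1]; linarith
    set xs : ∀ n, X n := fun n =>
      if h : (∃ x : X n, ‖x‖ < 1 ∧ 1 - δ < ‖T n x‖) then h.choose else 0 with hxsdef
    have hxsb : ∀ n, ‖xs n‖ ≤ 1 := by
      intro n; by_cases h : ∃ x : X n, ‖x‖ < 1 ∧ 1 - δ < ‖T n x‖
      · have hxe : xs n = h.choose := dif_pos h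
        rw [hxe]; exact h.choose_spec.1.le
      · have hxe : xs n = 0 := dif_neg h
        rw [hxe, norm_zero]; norm_num
    set y : lp X ∞ := ⟨xs, memℓp_infty ⟨1, by rintro - ⟨n, rfl⟩; exact hxsb n⟩⟩ with hydef
    obtain ⟨l', hl', hl'0, _⟩ := exists_ulim_norm X U (bigMap X T hT2 y)
    have h1 : 1 - δ ≤ l' := by
      refine ge_of_tendsto hl' ?_
      filter_upwards [hevA] with n hn
      have hx' := hx n hn
      rw [bigMap_apply]
      have hxe : y n = hx'.choose := dif_pos hx'
      rw [hxe]
      exact (hx'.choose_spec.2).le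
    have h2 : ‖Tq (Submodule.Quotient.mk y)‖ = l' := by
      rw [hTqdef, qOp_apply_mk, norm_mk_eq X U _ l' hl']
    have h3 : ‖(Submodule.Quotient.mk y : lp X ∞ ⧸ nullIdeal X U)‖ ≤ 1 :=
      le_trans (Submodule.Quotient.norm_mk_le _ _)
        (lp.norm_le_of_forall_le zero_le_one (fun n => hxsb n))
    have h4 : l' ≤ ‖Tq‖ := by
      calc l' = ‖Tq (Submodule.Quotient.mk y)‖ := h2.symm
        _ ≤ ‖Tq‖ * ‖(Submodule.Quotient.mk y : lp X ∞ ⧸ nullIdeal X U)‖ := Tq.le_opNorm _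
        _ ≤ ‖Tq‖ * 1 := mul_le_mul_of_nonneg_left h3 (ContinuousLinearMap.opNorm_nonneg Tq)
        _ = ‖Tq‖ := mul_one _
    linarith
  have hrad : nradius Tq ≤ L + ε := by
    refine Real.sSup_le ?_ (by linarith)
    rintro r ⟨q, f, hq, hf, hfq, rfl⟩
    have hgen : ∀ (S : ∀ n, X n →L[ℝ] X n) (hS2 : ∀ n, ‖S n‖ ≤ 2),
        (∀ n, ‖S n‖ ≤ 1) →
        (∀ᶠ n in (U : Filter ℕ), ∀ (x : X n) (g : X n →L[ℝ] ℝ),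
          ‖x‖ = 1 → ‖g‖ = 1 → g x = 1 → g (S n x) ≤ L') →
        f (qOp X U S hS2 q) ≤ L + ε := by
      intro S hS2 hS1 hSev
      set Sq := qOp X U S hS2 with hSqdef
      have hplus2 : ∀ n, ‖(1 : X n →L[ℝ] X n) + t • S n‖ ≤ 2 := by
        intro n
        have hone : ‖(1 : X n →L[ℝ] X n)‖ ≤ 1 := by
          simpa [ContinuousLinearMap.one_def] using
            (ContinuousLinearMap.norm_id_le : ‖ContinuousLinearMap.id ℝ (X n)‖ ≤ 1)
        have hsm : ‖t • S n‖ ≤ ‖t‖ * ‖S n‖ := ContinuousLinearMap.opNorm_smul_le _ _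
        have h5 : ‖t‖ * ‖S n‖ ≤ t * 1 := by
          rw [Real.norm_eq_abs, abs_of_pos ht0]
          exact mul_le_mul_of_nonneg_left (hS1 n) ht0.le
        calc ‖(1 : X n →L[ℝ] X n) + t • S n‖ ≤ ‖(1 : X n →L[ℝ] X n)‖ + ‖t • S n‖ :=
              norm_add_le _ _
          _ ≤ 2 := by nlinarith
      have hevD : ∀ᶠ n in (U : Filter ℕ), ‖(1 : X n →L[ℝ] X n) + t • S n‖ ≤ D := by
        rw [hDdef]
        filter_upwards [hSev] with n hn
        exact key_norm_bound (S n) L' t hL'0 (hS1 n) ht0 ht2 htL hn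
      have hnormD : ‖(1 : (lp X ∞ ⧸ nullIdeal X U) →L[ℝ] (lp X ∞ ⧸ nullIdeal X U)) + t • Sq‖ ≤ D := by
        have hb := qOp_norm_le_of_eventually X U
          (fun n => (1 : X n →L[ℝ] X n) + t • S n) hplus2 D hD0 hevD
        rw [qOp_one_add_smul X U S hS2 t hplus2] at hb
        exact hb
      have h1 : 1 + t * f (Sq q) ≤ D := by
        have e1 : f (q + t • Sq q) = 1 + t * f (Sq q) := by
          rw [map_add, map_smul, hfq, smul_eq_mul]
        have hadd : ((1 : (lp X ∞ ⧸ nullIdeal X U) →L[ℝ] (lp X ∞ ⧸ nullIdeal X U)) + t • Sq) q = q + t • Sq q := by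
          rw [ContinuousLinearMap.add_apply, ContinuousLinearMap.smul_apply,
            ContinuousLinearMap.one_apply]
        calc 1 + t * f (Sq q) = f (q + t • Sq q) := e1.symm
          _ ≤ ‖f (q + t • Sq q)‖ := by rw [Real.norm_eq_abs]; exact le_abs_self _
          _ ≤ ‖f‖ * ‖q + t • Sq q‖ := f.le_opNorm _
          _ = ‖((1 : (lp X ∞ ⧸ nullIdeal X U) →L[ℝ] (lp X ∞ ⧸ nullIdeal X U)) + t • Sq) q‖ := by rw [hf, one_mul, hadd]
          _ ≤ ‖(1 : (lp X ∞ ⧸ nullIdeal X U) →L[ℝ] (lp X ∞ ⧸ nullIdeal X U)) + t • Sq‖ * ‖q‖ := ((1 : (lp X ∞ ⧸ nullIdeal X U) →L[ℝ] (lp X ∞ ⧸ nullIdeal X U)) + t • Sq).le_opNorm q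
          _ = ‖(1 : (lp X ∞ ⧸ nullIdeal X U) →L[ℝ] (lp X ∞ ⧸ nullIdeal X U)) + t • Sq‖ := by rw [hq, mul_one]
          _ ≤ D := hnormD
      have hDval : (D - 1) * (1 - t*L') = t*t + t*L' := by
        rw [hDdef]
        field_simp
        ring
      have h4 : f (Sq q) * (t * (1 - t*L')) ≤ t*t + t*L' := by
        have h4a : t * f (Sq q) ≤ D - 1 := by linarith
        have h4b : (t * f (Sq q)) * (1 - t*L') ≤ (D - 1) * (1 - t*L') :=
          mul_le_mul_of_nonneg_right h4a hpos1.le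
        rw [hDval] at h4b
        have e2 : f (Sq q) * (t * (1 - t*L')) = (t * f (Sq q)) * (1 - t*L') := by ring
        linarith [e2 ▸ h4b]
      have h5 : t*t + t*L' ≤ (L + ε) * (t * (1 - t*L')) := by
        have hLB : L + ε ≤ B := by rw [hBdef, hL'def]; linarith
        have hL'B : L' ≤ B := by rw [hBdef]; linarith
        have hq1 : t * (L' * (L + ε)) ≤ t * (B * B) :=
          mul_le_mul_of_nonneg_left
            (mul_le_mul hL'B hLB (by linarith) (by linarith)) ht0.le
        have hq2 : t ≤ ε/8 := by
          refine le_trans htmin2 ?_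
          rw [div_le_div_iff₀ (by positivity) (by norm_num)]
          have hBB : (1:ℝ) ≤ B*B := by nlinarith
          nlinarith [mul_le_mul_of_nonneg_left hBB hε.le]
        nlinarith
      have h6 : 0 < t * (1 - t*L') := mul_pos ht0 hpos1
      exact le_of_mul_le_mul_right (h4.trans h5) h6
    have hposs : f (Tq q) ≤ L + ε := by
      apply hgen T hT2 hT1
      filter_upwards [hevrad] with n hn x g hx hg hgx
      exact le_trans (le_abs_self _) (le_trans (abs_le_nradius (T n) hx hg hgx) hn.1)
    have hnegs : -(f (Tq q)) ≤ L + ε := by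
      have hneg2 : ∀ n, ‖-(T n)‖ ≤ 2 := fun n => by rw [norm_neg]; exact hT2 n
      have heq : qOp X U (fun n => -(T n)) hneg2 = -Tq := qOp_neg X U T hT2 hneg2
      have hg1 := hgen (fun n => -(T n)) hneg2 (fun n => by rw [norm_neg]; exact hT1 n) ?_
      · rw [heq] at hg1
        simpa using hg1
      · filter_upwards [hevrad] with n hn x g hx hg hgx
        have e3 : g ((-(T n)) x) = -(g (T n x)) := by
          rw [ContinuousLinearMap.neg_apply, map_neg]
        rw [e3]
        exact le_trans (neg_le_abs _) (le_trans (abs_le_nradius (T n) hx hg hgx) hn.1)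
    exact abs_le.2 ⟨by linarith, hposs⟩
  have hmem : nradius Tq ∈ {r : ℝ | ∃ T' : (lp X ∞ ⧸ nullIdeal X U) →L[ℝ] (lp X ∞ ⧸ nullIdeal X U),
      ‖T'‖ = 1 ∧ r = nradius T'} := ⟨Tq, hTq1, rfl⟩
  exact le_trans (csInf_le ⟨0, by rintro r ⟨T', -, rfl⟩; exact nradius_nonneg T'⟩ hmem) hrad
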